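/- Elliptical Range Theorem consequence: for the 2×2 matrix B = [[0, √(1−a²)],[0, a]] with 0 < a < 1, the numerical range W(B) is the closed elliptical disk with foci 0 and a and minor axis of length √(1−a²); in particular, the leftmost point of W(B) is (a−1)/2. -/

import Mathlib

open Matrix

private lemma ellipse_abs_iff (a : ℝ) (ha : 0 < a) (ha1 : a < 1) (z : ℂ) :
    ‖z‖ + ‖z - (a : ℂ)‖ ≤ 1 ↔
    (1 - a ^ 2) * (2 * z.re - a) ^ 2 + 4 * z.im ^ 2 ≤ 1 - a ^ 2 := by
  set r1 := ‖z‖ with hr1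
  set r2 := ‖z - (a : ℂ)‖ with hr2
  have h1 : r1 ^ 2 = z.re ^ 2 + z.im ^ 2 := by
    rw [hr1, Complex.sq_norm, Complex.normSq_apply]; ring
  have h2 : r2 ^ 2 = (z.re - a) ^ 2 + z.im ^ 2 := by
    rw [hr2, Complex.sq_norm, Complex.normSq_apply]
    simp [Complex.sub_re, Complex.sub_im]; ring
  have hid : (1 - a ^ 2) * (2 * z.re - a) ^ 2 + 4 * z.im ^ 2 - (1 - a ^ 2)
      = ((r1 + r2) ^ 2 - 1) * (1 - (r1 - r2) ^ 2) := by
    have : ((r1 + r2) ^ 2 - 1) * (1 - (r1 - r2) ^ 2)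
        = 4 * r1 ^ 2 * r2 ^ 2 - (r1 ^ 2 + r2 ^ 2 - 1) ^ 2 := by ring
    rw [this, h1, h2]; ring
  have hr1n : 0 ≤ r1 := norm_nonneg _
  have hr2n : 0 ≤ r2 := norm_nonneg _
  have hdiff : |r1 - r2| ≤ a := by
    have h := abs_norm_sub_norm_le z (z - (a : ℂ))
    simpa [Complex.norm_real, abs_of_pos ha] using h
  have hdiff2 : (r1 - r2) ^ 2 ≤ a ^ 2 := by
    have := sq_abs (r1 - r2) ▸ pow_le_pow_left₀ (abs_nonneg _) hdiff 2
    simpa [sq_abs] using this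
  constructor
  · intro h
    have hfac : ((r1 + r2) ^ 2 - 1) * (1 - (r1 - r2) ^ 2) ≤ 0 := by
      apply mul_nonpos_of_nonpos_of_nonneg
      · nlinarith
      · nlinarith
    linarith [hid ▸ hfac]
  · intro h
    have hfac : ((r1 + r2) ^ 2 - 1) * (1 - (r1 - r2) ^ 2) ≤ 0 := by
      rw [← hid]; linarith
    have hpos : 0 < 1 - (r1 - r2) ^ 2 := by nlinarith
    have : (r1 + r2) ^ 2 ≤ 1 := by nlinarith
    nlinarith

private lemma quad_mem (a : ℝ) (ha : 0 < a) (ha1 : a < 1) (x0 x1 : ℂ)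
    (hx : Complex.normSq x0 + Complex.normSq x1 = 1) :
    (1 - a ^ 2) * (2 * ((Real.sqrt (1 - a ^ 2) : ℂ) * (starRingEnd ℂ) x0 * x1
        + ((a * Complex.normSq x1 : ℝ) : ℂ)).re - a) ^ 2
      + 4 * ((Real.sqrt (1 - a ^ 2) : ℂ) * (starRingEnd ℂ) x0 * x1
        + ((a * Complex.normSq x1 : ℝ) : ℂ)).im ^ 2 ≤ 1 - a ^ 2 := by
  set c := Real.sqrt (1 - a ^ 2) with hcdef
  have hc2 : c ^ 2 = 1 - a ^ 2 := Real.sq_sqrt (by nlinarith)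
  set p := (c : ℂ) * (starRingEnd ℂ) x0 * x1 with hp
  set t := Complex.normSq x1 with ht
  have hPQ : p.re ^ 2 + p.im ^ 2 = (1 - a ^ 2) * (1 - t) * t := by
    have h1 : Complex.normSq p = c ^ 2 * Complex.normSq x0 * t := by
      rw [hp, Complex.normSq_mul, Complex.normSq_mul, Complex.normSq_conj,
        Complex.normSq_ofReal, ← ht]
      ring
    have h2 : Complex.normSq x0 = 1 - t := by linarith
    have h3 : p.re ^ 2 + p.im ^ 2 = Complex.normSq p := by
      rw [Complex.normSq_apply]; ring
    rw [h3, h1, h2, hc2]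
  have hre : (p + ((a * t : ℝ) : ℂ)).re = p.re + a * t := by simp
  have him : (p + ((a * t : ℝ) : ℂ)).im = p.im := by simp
  rw [hre, him]
  nlinarith [sq_nonneg ((1 - a ^ 2) * (2 * t - 1) - 2 * a * p.re), hPQ]

private lemma surj_aux (a : ℝ) (ha : 0 < a) (ha1 : a < 1) (z : ℂ)
    (hz : (1 - a ^ 2) * (2 * z.re - a) ^ 2 + 4 * z.im ^ 2 ≤ 1 - a ^ 2) :
    ∃ x : EuclideanSpace ℂ (Fin 2), ‖x‖ = 1 ∧
      (Real.sqrt (1 - a ^ 2) : ℂ) * (starRingEnd ℂ) (x 0) * (x 1)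
        + ((a * Complex.normSq (x 1) : ℝ) : ℂ) = z := by
  have ha2 : (0:ℝ) < 1 - a ^ 2 := by nlinarith
  set X := z.re with hX
  set Y := z.im with hY
  set c := Real.sqrt (1 - a ^ 2) with hcdef
  have hc2 : c ^ 2 = 1 - a ^ 2 := Real.sq_sqrt ha2.le
  have hcpos : 0 < c := Real.sqrt_pos.2 ha2
  have hu2 : (2 * X - a) ^ 2 ≤ 1 := by nlinarith [sq_nonneg z.im]
  have hul : -1 ≤ 2 * X - a := by nlinarith
  have huu : 2 * X - a ≤ 1 := by nlinarith
  set D := (2 * a * X + (1 - a ^ 2)) ^ 2 - 4 * (X ^ 2 + Y ^ 2) with hDdef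
  have hDalt : D = (1 - a ^ 2) - (1 - a ^ 2) * (2 * X - a) ^ 2 - 4 * Y ^ 2 := by
    rw [hDdef]; ring
  have hDnn : 0 ≤ D := by rw [hDalt]; linarith
  set t := (2 * a * X + (1 - a ^ 2) + Real.sqrt D) / 2 with htdef
  have hsD : Real.sqrt D ^ 2 = D := Real.sq_sqrt hDnn
  have hsDnn : 0 ≤ Real.sqrt D := Real.sqrt_nonneg D
  have ht0 : 0 < t := by rw [htdef]; nlinarith
  have htub : Real.sqrt D ≤ 1 + a ^ 2 - 2 * a * X := by
    have hrhs : (0:ℝ) ≤ 1 + a ^ 2 - 2 * a * X := by nlinarith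
    have hDle : D ≤ (1 + a ^ 2 - 2 * a * X) ^ 2 := by
      rw [hDalt]; nlinarith [sq_nonneg (a - (2 * X - a)), sq_nonneg Y]
    calc Real.sqrt D ≤ Real.sqrt ((1 + a ^ 2 - 2 * a * X) ^ 2) := Real.sqrt_le_sqrt hDle
      _ = 1 + a ^ 2 - 2 * a * X := Real.sqrt_sq hrhs
  have ht1 : t ≤ 1 := by rw [htdef]; linarith
  have h2t : 2 * t - (2 * a * X + (1 - a ^ 2)) = Real.sqrt D := by rw [htdef]; ring
  have hsq : (2 * t - (2 * a * X + (1 - a ^ 2))) ^ 2 = D := by rw [h2t]; exact hsD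
  have hquad : X ^ 2 + Y ^ 2 = (2 * a * X + (1 - a ^ 2)) * t - t ^ 2 := by
    linear_combination (1/4 : ℝ) * hsq + (1/4 : ℝ) * hDdef
  have hkey : (X - a * t) ^ 2 + Y ^ 2 = (1 - a ^ 2) * (1 - t) * t := by
    linear_combination hquad
  set s := Real.sqrt t with hsdef
  have hs2 : s ^ 2 = t := Real.sq_sqrt ht0.le
  have hs0 : 0 < s := Real.sqrt_pos.2 ht0
  set x0 := (starRingEnd ℂ) ((z - ((a * t : ℝ) : ℂ)) / ((c * s : ℝ) : ℂ)) with hx0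
  set x1 := ((s : ℝ) : ℂ) with hx1
  have hcs : ((c * s : ℝ) : ℂ) ≠ 0 := Complex.ofReal_ne_zero.2 (by positivity)
  have hnum : Complex.normSq (z - ((a * t : ℝ) : ℂ)) = (X - a * t) ^ 2 + Y ^ 2 := by
    rw [Complex.normSq_apply]
    simp [Complex.sub_re, Complex.sub_im, ← hX, ← hY]
    ring
  have hcs2 : (c * s) * (c * s) = (1 - a ^ 2) * t := by
    rw [show (c * s) * (c * s) = c ^ 2 * s ^ 2 by ring, hc2, hs2]
  have hn0 : Complex.normSq x0 = 1 - t := by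
    rw [hx0, Complex.normSq_conj, Complex.normSq_div, hnum, Complex.normSq_ofReal,
      hkey, hcs2]
    field_simp
  have hn1 : Complex.normSq x1 = t := by
    rw [hx1, Complex.normSq_ofReal, ← hs2]; ring
  clear_value X Y c D t s x0 x1
  refine ⟨(WithLp.equiv 2 (Fin 2 → ℂ)).symm ![x0, x1], ?_, ?_⟩
  · rw [EuclideanSpace.norm_eq]
    have e0 : (WithLp.equiv 2 (Fin 2 → ℂ)).symm ![x0, x1] 0 = x0 := rfl
    have e1 : (WithLp.equiv 2 (Fin 2 → ℂ)).symm ![x0, x1] 1 = x1 := rfl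
    rw [Fin.sum_univ_two, e0, e1]
    have : ‖x0‖ ^ 2 + ‖x1‖ ^ 2 = 1 := by
      rw [Complex.sq_norm, Complex.sq_norm,
        hn0, hn1]; ring
    rw [this, Real.sqrt_one]
  · have e0 : (WithLp.equiv 2 (Fin 2 → ℂ)).symm ![x0, x1] 0 = x0 := rfl
    have e1 : (WithLp.equiv 2 (Fin 2 → ℂ)).symm ![x0, x1] 1 = x1 := rfl
    rw [e0, e1, hn1, hx0, Complex.conj_conj, hx1]
    have hcne : (c : ℂ) ≠ 0 := Complex.ofReal_ne_zero.2 hcpos.ne'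
    have hsne : (s : ℂ) ≠ 0 := Complex.ofReal_ne_zero.2 hs0.ne'
    field_simp
    push_cast
    ring

private lemma dot_eq (a : ℝ) (x : EuclideanSpace ℂ (Fin 2)) :
    star (x : Fin 2 → ℂ) ⬝ᵥ (!![(0 : ℂ), Real.sqrt (1 - a ^ 2); 0, (a : ℂ)]).mulVec x
      = (Real.sqrt (1 - a ^ 2) : ℂ) * (starRingEnd ℂ) (x 0) * x 1
        + ((a * Complex.normSq (x 1) : ℝ) : ℂ) := by
  simp [dotProduct, Matrix.mulVec, Fin.sum_univ_two, Matrix.vecHead, Matrix.vecTail]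
  rw [Complex.normSq_eq_conj_mul_self]
  ring

private lemma norm_one_normSq (x : EuclideanSpace ℂ (Fin 2)) (hx : ‖x‖ = 1) :
    Complex.normSq (x 0) + Complex.normSq (x 1) = 1 := by
  rw [EuclideanSpace.norm_eq, Fin.sum_univ_two] at hx
  have h := Real.sqrt_eq_one.mp hx
  rw [Complex.sq_norm, Complex.sq_norm] at h
  exact h

theorem elliptical_range_two_by_two
    (a : ℝ) (ha : 0 < a) (ha1 : a < 1)
    (B : Matrix (Fin 2) (Fin 2) ℂ)
    (hB : B = !![(0 : ℂ), Real.sqrt (1 - a ^ 2); 0, (a : ℂ)]) :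
    {w : ℂ | ∃ x : EuclideanSpace ℂ (Fin 2),
        ‖x‖ = 1 ∧ star (x : Fin 2 → ℂ) ⬝ᵥ B.mulVec x = w}
      = {z : ℂ | ‖z‖ + ‖z - (a : ℂ)‖ ≤ 1} ∧
    IsLeast {t : ℝ | ∃ z ∈ {w : ℂ | ∃ x : EuclideanSpace ℂ (Fin 2),
        ‖x‖ = 1 ∧ star (x : Fin 2 → ℂ) ⬝ᵥ B.mulVec x = w}, t = z.re}
      ((a - 1) / 2) := by
  subst hB
  have hset : {w : ℂ | ∃ x : EuclideanSpace ℂ (Fin 2),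
        ‖x‖ = 1 ∧ star (x : Fin 2 → ℂ) ⬝ᵥ
          (!![(0 : ℂ), Real.sqrt (1 - a ^ 2); 0, (a : ℂ)]).mulVec x = w}
      = {z : ℂ | ‖z‖ + ‖z - (a : ℂ)‖ ≤ 1} := by
    ext w
    simp only [Set.mem_setOf_eq]
    constructor
    · rintro ⟨x, hx, hw⟩
      rw [ellipse_abs_iff a ha ha1 w]
      have hw' : w = (Real.sqrt (1 - a ^ 2) : ℂ) * (starRingEnd ℂ) (x 0) * x 1
          + ((a * Complex.normSq (x 1) : ℝ) : ℂ) := by rw [← hw, dot_eq]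
      rw [hw']
      exact quad_mem a ha ha1 (x 0) (x 1) (norm_one_normSq x hx)
    · intro hzmem
      rw [ellipse_abs_iff a ha ha1 w] at hzmem
      obtain ⟨x, hx1, hx2⟩ := surj_aux a ha ha1 w hzmem
      exact ⟨x, hx1, by rw [dot_eq]; exact hx2⟩
  refine ⟨hset, ?_, ?_⟩
  · refine ⟨(((a - 1) / 2 : ℝ) : ℂ), ?_, ?_⟩
    · rw [hset]
      simp only [Set.mem_setOf_eq]
      have h1 : (((a - 1) / 2 : ℝ) : ℂ) - (a : ℂ) = ((-((a + 1) / 2) : ℝ) : ℂ) := by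
        push_cast; ring
      rw [h1, Complex.norm_real, Complex.norm_real, Real.norm_eq_abs, Real.norm_eq_abs]
      rw [abs_of_nonpos (by linarith), abs_of_nonpos (by linarith)]
      linarith
    · rw [Complex.ofReal_re]
  · rintro r ⟨z, hzW, hr⟩
    rw [hset] at hzW
    simp only [Set.mem_setOf_eq] at hzW
    have h1 : -z.re ≤ ‖z‖ := by
      have h := Complex.abs_re_le_norm z
      have := neg_abs_le z.re
      linarith
    have h2 : a - z.re ≤ ‖z - (a : ℂ)‖ := by
      have h := Complex.abs_re_le_norm (z - (a : ℂ))
      have h3 : (z - (a : ℂ)).re = z.re - a := by simp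
      rw [h3] at h
      have := neg_abs_le (z.re - a)
      linarith
    rw [hr]
    linarith
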